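/- Fix i ≥ 1, u ∈ [0,1), q ∈ (0,1), α > 0, and set p = α/K. Then K·I₂ → (α·i/ln 2)·∑_{j=2}^∞ [(1-q)^j/(j(j-1))]·e^{α(u^j−1)}·(u^j + j − j·u − 1) as K → ∞, and this limiting series converges. -/

import Mathlib

open Filter
open Finset Topology

private lemma aux_KBA (n : ℕ) (x y : ℝ) :
    Tendsto (fun K : ℕ => (K:ℝ) * ((1 + y/K) - (1 + x/K)^n)) atTop (𝓝 (y - n*x)) := by
  have h3 : HasDerivAt (fun t : ℝ => 1 + x*t) x 0 := by
    simpa using ((hasDerivAt_id (0:ℝ)).const_mul x).const_add 1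
  have h1 : HasDerivAt (fun t : ℝ => 1 + y*t) y 0 := by
    simpa using ((hasDerivAt_id (0:ℝ)).const_mul y).const_add 1
  have h2 : HasDerivAt (fun t : ℝ => (1 + x*t)^n) (n*x) 0 := by
    have h := h3.pow n
    simp at h
    exact h
  have hg : HasDerivAt (fun t : ℝ => (1 + y*t) - (1 + x*t)^n) (y - n*x) 0 := h1.sub h2
  have hslope := hasDerivAt_iff_tendsto_slope.mp hg
  have hinv : Tendsto (fun K : ℕ => (K:ℝ)⁻¹) atTop (𝓝[≠] (0:ℝ)) := by
    rw [tendsto_nhdsWithin_iff]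
    refine ⟨tendsto_inv_atTop_zero.comp tendsto_natCast_atTop_atTop, ?_⟩
    filter_upwards [eventually_ge_atTop 1] with K hK
    have h0 : (0:ℝ) < K := by exact_mod_cast Nat.lt_of_lt_of_le Nat.zero_lt_one hK
    simp only [Set.mem_compl_iff, Set.mem_singleton_iff, inv_eq_zero]
    exact ne_of_gt h0
  refine (hslope.comp hinv).congr' ?_
  filter_upwards [eventually_ge_atTop 1] with K hK
  have h0 : (0:ℝ) < K := by exact_mod_cast Nat.lt_of_lt_of_le Nat.zero_lt_one hK
  have h0' : (K:ℝ) ≠ 0 := ne_of_gt h0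
  simp only [Function.comp_apply, slope_def_field]
  rw [div_eq_mul_inv y, div_eq_mul_inv x]
  field_simp
  ring

private lemma aux_r_bounds (u p : ℝ) (hu0 : 0 ≤ u) (hu1 : u < 1) (hp0 : 0 ≤ p)
    (hp : p ≤ 1/2) (n : ℕ) :
    0 ≤ (1-p+p*u)^n / (1-p+p*u^n) ∧ (1-p+p*u)^n / (1-p+p*u^n) ≤ 1 := by
  have hun : u^n ≤ 1 := pow_le_one₀ hu0 hu1.le
  have hun0 : 0 ≤ u^n := pow_nonneg hu0 n
  have hB : (1:ℝ)/2 ≤ 1-p+p*u^n := by nlinarith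
  have hx0 : 0 ≤ 1-p+p*u := by nlinarith
  have hAB : (1-p+p*u)^n ≤ 1-p+p*u^n := by
    have h := (convexOn_pow n).2 (Set.mem_Ici.2 zero_le_one) (Set.mem_Ici.2 hu0)
      (by linarith : (0:ℝ) ≤ 1-p) hp0 (by ring)
    simp only [smul_eq_mul, mul_one, one_pow] at h
    calc (1-p+p*u)^n = ((1-p)*1 + p*u)^n := by ring_nf
    _ ≤ (1-p)*1 + p*u^n := by simpa using h
    _ = 1-p+p*u^n := by ring
  exact ⟨div_nonneg (pow_nonneg hx0 n) (by linarith),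
    (div_le_one (by linarith)).2 hAB⟩

private lemma aux_one_sub_ri (i n : ℕ) (u p : ℝ) (hu0 : 0 ≤ u) (hu1 : u < 1)
    (hp0 : 0 ≤ p) (hp : p ≤ 1/2) :
    1 - ((1-p+p*u)^n / (1-p+p*u^n))^i ≤ i * (2 * (n * p)) := by
  obtain ⟨hr0, hr1⟩ := aux_r_bounds u p hu0 hu1 hp0 hp n
  set r : ℝ := (1-p+p*u)^n / (1-p+p*u^n) with hrdef
  clear_value r
  have hun : u^n ≤ 1 := pow_le_one₀ hu0 hu1.le
  have hun0 : 0 ≤ u^n := pow_nonneg hu0 n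
  have hB : (1:ℝ)/2 ≤ 1-p+p*u^n := by nlinarith
  have hB0 : (0:ℝ) < 1-p+p*u^n := by linarith
  have hbern : 1 + (n:ℝ)*(p*u - p) ≤ (1-p+p*u)^n := by
    have h := one_add_mul_le_pow (a := p*u - p) (by nlinarith) n
    have he : (1:ℝ) + (p*u - p) = 1-p+p*u := by ring
    rwa [he] at h
  have hBA : (1-p+p*u^n) - (1-p+p*u)^n ≤ n*p := by
    have hn0 : (0:ℝ) ≤ n := Nat.cast_nonneg n
    nlinarith [mul_nonneg (mul_nonneg hn0 hp0) hu0, mul_nonneg hp0 (sub_nonneg.2 hun)]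
  have h1r : 1 - r ≤ 2 * (n * p) := by
    have he : 1 - r = ((1-p+p*u^n) - (1-p+p*u)^n) / (1-p+p*u^n) := by
      rw [hrdef]; field_simp
    rw [he, div_le_iff₀ hB0]
    have hnp0 : (0:ℝ) ≤ (n:ℝ)*p := mul_nonneg (Nat.cast_nonneg n) hp0
    nlinarith
  have hgeo : 1 - r^i = (∑ l ∈ range i, r^l) * (1 - r) := by
    linear_combination geom_sum_mul r i
  have hsum : (∑ l ∈ range i, r^l) ≤ (i:ℝ) := by
    calc (∑ l ∈ range i, r^l) ≤ ∑ l ∈ range i, 1 :=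
      Finset.sum_le_sum (fun l _ => pow_le_one₀ hr0 hr1)
    _ = (i:ℝ) := by simp
  calc 1 - r^i = (∑ l ∈ range i, r^l) * (1 - r) := hgeo
  _ ≤ (i:ℝ) * (2 * (n * p)) := by
      apply mul_le_mul hsum h1r (by linarith) (Nat.cast_nonneg i)

private lemma aux_pointwise (i n : ℕ) (u α : ℝ) :
    Tendsto (fun K : ℕ => (K:ℝ) *
        (1 - ((1 - α/K + α/K*u)^n / (1 - α/K + α/K*u^n))^i)) atTop
      (𝓝 ((i:ℝ) * (α * (u^n - 1) - n*(α*(u-1))))) := by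
  have hBlim : Tendsto (fun K : ℕ => 1 - α/K + α/K*u^n) atTop (𝓝 1) := by
    have h0 := tendsto_const_div_atTop_nhds_zero_nat (α*(u^n-1))
    have h1 := (tendsto_const_nhds (x := (1:ℝ)) (f := atTop (α := ℕ))).add h0
    simp only [add_zero] at h1
    exact h1.congr (fun K => by ring)
  have hAlim : Tendsto (fun K : ℕ => (1 - α/K + α/K*u)^n) atTop (𝓝 1) := by
    have h0 := tendsto_const_div_atTop_nhds_zero_nat (α*(u-1))
    have h1 := (tendsto_const_nhds (x := (1:ℝ)) (f := atTop (α := ℕ))).add h0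
    simp only [add_zero] at h1
    have h2 := (h1.congr (fun K => by ring :
      ∀ K : ℕ, 1 + α*(u-1)/K = 1 - α/K + α/K*u)).pow n
    simpa using h2
  have hr : Tendsto (fun K : ℕ => (1 - α/K + α/K*u)^n / (1 - α/K + α/K*u^n))
      atTop (𝓝 1) := by
    have h := hAlim.div hBlim one_ne_zero
    simp at h
    exact h
  have hgeom : Tendsto (fun K : ℕ =>
      ∑ l ∈ range i, ((1 - α/K + α/K*u)^n / (1 - α/K + α/K*u^n))^l) atTop (𝓝 i) := by
    have := tendsto_finset_sum (range i) (fun l (_ : l ∈ range i) => hr.pow l)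
    simpa using this
  have hKBA : Tendsto (fun K : ℕ =>
      (K:ℝ) * ((1 - α/K + α/K*u^n) - (1 - α/K + α/K*u)^n)) atTop
      (𝓝 (α*(u^n-1) - n*(α*(u-1)))) := by
    have := aux_KBA n (α*(u-1)) (α*(u^n-1))
    exact this.congr (fun K => by ring)
  have hmain := hgeom.mul (hKBA.div hBlim one_ne_zero)
  rw [div_one] at hmain
  refine hmain.congr' ?_
  filter_upwards [hBlim.eventually (eventually_gt_nhds (by norm_num : (1:ℝ)/2 < 1))]
    with K hK
  have hBne : (1 - α/K + α/K*u^n) ≠ 0 := by linarith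
  set A := (1 - α/(K:ℝ) + α/(K:ℝ)*u)^n with hA
  set B := 1 - α/(K:ℝ) + α/(K:ℝ)*u^n with hB
  have h1 : 1 - (A/B)^i = (∑ l ∈ range i, (A/B)^l) * (1 - A/B) := by
    linear_combination geom_sum_mul (A/B) i
  have h2 : 1 - A/B = (B - A)/B := by field_simp
  simp only [Pi.div_apply]
  rw [h1, h2]
  ring


/-- The error term I₂ (series index j ≥ 2 written as j = m + 2). -/
noncomputable def I2 (K i : ℕ) (p u q : ℝ) : ℝ :=
  (1 / Real.log 2) *
    ∑' m : ℕ,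
      (1 - q) ^ (m + 2) / ((m + 2) * (m + 1)) *
        (1 - p + p * u ^ (m + 2)) ^ K *
        (1 - ((1 - p + p * u) ^ (m + 2) / (1 - p + p * u ^ (m + 2))) ^ i)

/-- With p = α/K, K·I₂ converges as K → ∞ to
(α·i/ln 2)·∑_{j=2}^∞ [(1-q)^j/(j(j-1))]·e^{α(u^j−1)}·(u^j + j − ju − 1),
and the limiting series converges. -/
theorem KI2_tendsto (i : ℕ) (hi : 1 ≤ i) (u q α : ℝ)
    (hu : u ∈ Set.Ico (0:ℝ) 1) (hq : q ∈ Set.Ioo (0:ℝ) 1) (hα : 0 < α) :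
    Summable (fun m : ℕ =>
        (1 - q) ^ (m + 2) / ((m + 2) * (m + 1)) *
          Real.exp (α * (u ^ (m + 2) - 1)) *
          (u ^ (m + 2) + (m + 2) - (m + 2) * u - 1))
    ∧ Tendsto (fun K : ℕ => (K : ℝ) * I2 K i (α / K) u q) atTop
        (nhds (α * i / Real.log 2 *
          ∑' m : ℕ,
            (1 - q) ^ (m + 2) / ((m + 2) * (m + 1)) *
              Real.exp (α * (u ^ (m + 2) - 1)) *
              (u ^ (m + 2) + (m + 2) - (m + 2) * u - 1))) := by
  obtain ⟨hu0, hu1⟩ := hu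
  obtain ⟨hq0, hq1⟩ := hq
  have hq1' : (0:ℝ) < 1 - q := by linarith
  have hq2 : (1:ℝ) - q < 1 := by linarith
  have hgeomsum : Summable (fun m : ℕ => (1-q)^(m+2)) := by
    have h := (summable_geometric_of_lt_one hq1'.le hq2).mul_right ((1-q)^2)
    exact h.congr (fun m => (pow_add (1-q) m 2).symm)
  have hc0 : ∀ m : ℕ, 0 ≤ u ^ (m + 2) + ((m:ℝ) + 2) - ((m:ℝ) + 2) * u - 1 := by
    intro m
    have h := one_add_mul_le_pow (a := u - 1) (by linarith) (m+2)
    have he : (1:ℝ) + (u-1) = u := by ring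
    rw [he] at h
    push_cast at h
    linarith
  have hcle : ∀ m : ℕ, u ^ (m + 2) + ((m:ℝ) + 2) - ((m:ℝ) + 2) * u - 1 ≤ (m:ℝ) + 2 := by
    intro m
    have h1 : u ^ (m+2) ≤ 1 := pow_le_one₀ hu0 hu1.le
    have h2 : 0 ≤ ((m:ℝ)+2) * u := by positivity
    linarith
  have hsummable : Summable (fun m : ℕ =>
      (1 - q) ^ (m + 2) / ((m + 2) * (m + 1)) * Real.exp (α * (u ^ (m + 2) - 1)) *
        (u ^ (m + 2) + (m + 2) - (m + 2) * u - 1)) := by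
    apply Summable.of_nonneg_of_le ?_ ?_ hgeomsum
    · intro m
      have he : (0:ℝ) ≤ Real.exp (α * (u ^ (m+2) - 1)) := (Real.exp_pos _).le
      have h1 : (0:ℝ) ≤ (1-q)^(m+2) / (((m:ℝ)+2)*((m:ℝ)+1)) := by positivity
      exact mul_nonneg (mul_nonneg h1 he) (hc0 m)
    · intro m
      have hE : Real.exp (α * (u ^ (m+2) - 1)) ≤ 1 := by
        rw [Real.exp_le_one_iff]
        have : u^(m+2) ≤ 1 := pow_le_one₀ hu0 hu1.le
        nlinarith
      have hC0 : (0:ℝ) ≤ (1-q)^(m+2) / (((m:ℝ)+2)*((m:ℝ)+1)) := by positivity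
      calc (1 - q) ^ (m + 2) / (((m:ℝ) + 2) * ((m:ℝ) + 1)) *
            Real.exp (α * (u ^ (m + 2) - 1)) *
            (u ^ (m + 2) + ((m:ℝ) + 2) - ((m:ℝ) + 2) * u - 1)
          ≤ (1 - q) ^ (m + 2) / (((m:ℝ) + 2) * ((m:ℝ) + 1)) * 1 * ((m:ℝ) + 2) := by
            apply mul_le_mul (mul_le_mul_of_nonneg_left hE hC0) (hcle m) (hc0 m)
            rw [mul_one]; exact hC0
        _ = (1 - q) ^ (m + 2) / ((m:ℝ) + 1) := by
            rw [mul_one]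
            have h1 : ((m:ℝ)+2) ≠ 0 := by positivity
            have h2 : ((m:ℝ)+1) ≠ 0 := by positivity
            field_simp
        _ ≤ (1 - q) ^ (m + 2) := by
            apply div_le_self (by positivity)
            have := Nat.cast_nonneg (α := ℝ) m
            linarith
  refine ⟨hsummable, ?_⟩
  -- the dominated-convergence limit
  have key : Tendsto (fun K : ℕ => ∑' m : ℕ,
      (K:ℝ) * ((1 - q) ^ (m + 2) / ((m + 2) * (m + 1)) *
        (1 - α/K + α/K * u ^ (m + 2)) ^ K *
        (1 - ((1 - α/K + α/K * u) ^ (m + 2) / (1 - α/K + α/K * u ^ (m + 2))) ^ i)))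
      atTop (𝓝 (∑' m : ℕ,
      (1 - q) ^ (m + 2) / ((m + 2) * (m + 1)) *
        (Real.exp (α * (u ^ (m + 2) - 1)) *
          ((i:ℝ) * (α * (u ^ (m + 2) - 1) - ((m+2 : ℕ):ℝ) * (α * (u - 1))))))) := by
    apply tendsto_tsum_of_dominated_convergence
      (bound := fun m : ℕ => 2 * (i:ℝ) * α * (1-q)^(m+2))
      (hgeomsum.mul_left _)
    · intro m
      have hB : Tendsto (fun K : ℕ => (1 - α/K + α/K * u^(m+2))^K) atTop
          (𝓝 (Real.exp (α*(u^(m+2)-1)))) := by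
        refine (Real.tendsto_one_add_div_pow_exp (α*(u^(m+2)-1))).congr (fun K => ?_)
        rw [show (1:ℝ) + α*(u^(m+2)-1)/(K:ℝ) = 1 - α/K + α/K*u^(m+2) from by ring]
      have hP := aux_pointwise i (m+2) u α
      have h := (hB.mul hP).const_mul ((1 - q) ^ (m + 2) / (((m:ℝ) + 2) * ((m:ℝ) + 1)))
      exact h.congr (fun K => by ring)
    · filter_upwards [eventually_ge_atTop 1,
        (tendsto_const_div_atTop_nhds_zero_nat α).eventually
          (eventually_le_nhds (by norm_num : (0:ℝ) < 1/2))] with K hK1 hK2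
      intro m
      have hK0 : (0:ℝ) < K := by
        exact_mod_cast Nat.lt_of_lt_of_le Nat.zero_lt_one hK1
      have hp0 : (0:ℝ) ≤ α / K := (div_pos hα hK0).le
      obtain ⟨hr0, hr1⟩ := aux_r_bounds u (α/K) hu0 hu1 hp0 hK2 (m+2)
      have hsle := aux_one_sub_ri i (m+2) u (α/K) hu0 hu1 hp0 hK2
      have hun : u^(m+2) ≤ 1 := pow_le_one₀ hu0 hu1.le
      have hun0 : (0:ℝ) ≤ u^(m+2) := pow_nonneg hu0 _
      have hB0 : (0:ℝ) ≤ 1 - α/K + α/K*u^(m+2) := by nlinarith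
      have hB1 : 1 - α/K + α/K*u^(m+2) ≤ 1 := by nlinarith
      have hBK : (1 - α/K + α/K*u^(m+2))^K ≤ 1 := pow_le_one₀ hB0 hB1
      have hBK0 : (0:ℝ) ≤ (1 - α/K + α/K*u^(m+2))^K := pow_nonneg hB0 K
      have hs0 : (0:ℝ) ≤ 1 - ((1 - α/K + α/K*u)^(m+2)/(1 - α/K + α/K*u^(m+2)))^i := by
        have := pow_le_one₀ hr0 hr1 (n := i)
        linarith
      have hC0 : (0:ℝ) ≤ (1-q)^(m+2) / (((m:ℝ)+2)*((m:ℝ)+1)) := by positivity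
      have hKp : (K:ℝ) * (α / K) = α := by field_simp
      rw [Real.norm_eq_abs, abs_of_nonneg (mul_nonneg (Nat.cast_nonneg K)
        (mul_nonneg (mul_nonneg hC0 hBK0) hs0))]
      calc (K:ℝ) * ((1-q)^(m+2) / (((m:ℝ)+2)*((m:ℝ)+1)) *
              (1 - α/K + α/K*u^(m+2))^K *
              (1 - ((1 - α/K + α/K*u)^(m+2)/(1 - α/K + α/K*u^(m+2)))^i))
          ≤ (K:ℝ) * ((1-q)^(m+2) / (((m:ℝ)+2)*((m:ℝ)+1)) * 1 *
              ((i:ℝ) * (2 * (((m+2:ℕ):ℝ) * (α/K))))) := by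
            apply mul_le_mul_of_nonneg_left ?_ (Nat.cast_nonneg K)
            apply mul_le_mul ?_ hsle hs0 ?_
            · rw [mul_one]; exact mul_le_of_le_one_right hC0 hBK
            · rw [mul_one]; exact hC0
        _ = 2*(i:ℝ)*(((m+2:ℕ):ℝ) * ((1-q)^(m+2) / (((m:ℝ)+2)*((m:ℝ)+1)))) * ((K:ℝ)*(α/K)) := by
            ring
        _ = 2*(i:ℝ)*(((m+2:ℕ):ℝ) * ((1-q)^(m+2) / (((m:ℝ)+2)*((m:ℝ)+1)))) * α := by
            rw [hKp]
        _ ≤ 2*(i:ℝ)*((1-q)^(m+2)) * α := by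
            apply mul_le_mul_of_nonneg_right ?_ hα.le
            apply mul_le_mul_of_nonneg_left ?_ (by positivity : (0:ℝ) ≤ 2*(i:ℝ))
            have h1 : ((m:ℝ)+2) ≠ 0 := by positivity
            have h2 : ((m:ℝ)+1) ≠ 0 := by positivity
            have heq : ((m+2:ℕ):ℝ) * ((1-q)^(m+2)/(((m:ℝ)+2)*((m:ℝ)+1)))
                = (1-q)^(m+2)/((m:ℝ)+1) := by
              push_cast
              field_simp
            rw [heq]
            apply div_le_self (by positivity)
            have := Nat.cast_nonneg (α := ℝ) m
            linarith
        _ = 2*(i:ℝ)*α*(1-q)^(m+2) := by ring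
  -- assemble
  have hGsum : (∑' m : ℕ,
      (1 - q) ^ (m + 2) / ((m + 2) * (m + 1)) *
        (Real.exp (α * (u ^ (m + 2) - 1)) *
          ((i:ℝ) * (α * (u ^ (m + 2) - 1) - ((m+2 : ℕ):ℝ) * (α * (u - 1))))))
      = (i:ℝ) * α * ∑' m : ℕ,
      (1 - q) ^ (m + 2) / ((m + 2) * (m + 1)) *
          Real.exp (α * (u ^ (m + 2) - 1)) *
          (u ^ (m + 2) + (m + 2) - (m + 2) * u - 1) := by
    rw [← tsum_mul_left]
    exact tsum_congr (fun m => by push_cast; ring)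
  rw [show α * (i:ℝ) / Real.log 2 * (∑' m : ℕ,
      (1 - q) ^ (m + 2) / ((m + 2) * (m + 1)) *
          Real.exp (α * (u ^ (m + 2) - 1)) *
          (u ^ (m + 2) + (m + 2) - (m + 2) * u - 1))
    = (1/Real.log 2) * (∑' m : ℕ,
      (1 - q) ^ (m + 2) / ((m + 2) * (m + 1)) *
        (Real.exp (α * (u ^ (m + 2) - 1)) *
          ((i:ℝ) * (α * (u ^ (m + 2) - 1) - ((m+2 : ℕ):ℝ) * (α * (u - 1)))))) from by
    rw [hGsum]; ring]
  refine (key.const_mul (1/Real.log 2)).congr (fun K => ?_)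
  simp only [I2]
  rw [show (K:ℝ) * ((1 / Real.log 2) * ∑' m : ℕ,
      (1 - q) ^ (m + 2) / ((m + 2) * (m + 1)) *
        (1 - α/K + α/K * u ^ (m + 2)) ^ K *
        (1 - ((1 - α/K + α/K * u) ^ (m + 2) / (1 - α/K + α/K * u ^ (m + 2))) ^ i))
    = (1 / Real.log 2) * ((K:ℝ) * ∑' m : ℕ,
      (1 - q) ^ (m + 2) / ((m + 2) * (m + 1)) *
        (1 - α/K + α/K * u ^ (m + 2)) ^ K *
        (1 - ((1 - α/K + α/K * u) ^ (m + 2) / (1 - α/K + α/K * u ^ (m + 2))) ^ i))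
    from by ring, ← tsum_mul_left]
  rw [tsum_mul_left, tsum_mul_left]
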